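/- arXiv:2102.07626 — 5 statements merged into one kernel-verified Lean document; each statement's English description precedes it below -/
import Mathlib

section
/- Let n ≥ 1, λ ∈ (0,1), and let f : {0,1}³ → {0,1} be an even local rule, i.e. f(0,0,0) = 0. For the NDECA transition matrix P on X_n, every initial configuration y ∈ X_n with y ≠ 0, and every t ≥ 1, the probability of not being in the all-zero configuration at time t satisfies Σ_{x ∈ X_n, x ≠ 0} (Pᵗ)(y,x) ≤ (1 − (1−λ)ⁿ)ᵗ ≤ exp(−t·(1−λ)ⁿ). -/
/-- NDECA transition matrix on the ring `ℤ/nℤ`: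
`P(x,y) = Π_i [yᵢ·λ·f(x_{i-1},x_i,x_{i+1}) + (1-yᵢ)·(1-λ·f(x_{i-1},x_i,x_{i+1}))]`. -/
noncomputable def ndecaMatrix (n : ℕ) [NeZero n] (f : Bool → Bool → Bool → Bool) (l : ℝ) :
    Matrix (ZMod n → Bool) (ZMod n → Bool) ℝ :=
  fun x y => ∏ i : ZMod n,
    (((y i).toNat : ℝ) * (l * ((f (x (i - 1)) (x i) (x (i + 1))).toNat : ℝ)) +
      (1 - ((y i).toNat : ℝ)) * (1 - l * ((f (x (i - 1)) (x i) (x (i + 1))).toNat : ℝ)))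

lemma ndeca_nonneg (n : ℕ) [NeZero n] (f : Bool → Bool → Bool → Bool) (l : ℝ)
    (hl : l ∈ Set.Ioo (0:ℝ) 1) (x z : ZMod n → Bool) : 0 ≤ ndecaMatrix n f l x z := by
  obtain ⟨h0, h1⟩ := hl
  unfold ndecaMatrix
  apply Finset.prod_nonneg
  intro i _
  cases hz : z i <;> cases hff : f (x (i-1)) (x i) (x (i+1)) <;>
    simp [hz, hff] <;> nlinarith

lemma ndeca_rowsum (n : ℕ) [NeZero n] (f : Bool → Bool → Bool → Bool) (l : ℝ)
    (x : ZMod n → Bool) : ∑ z : ZMod n → Bool, ndecaMatrix n f l x z = 1 := by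
  unfold ndecaMatrix
  rw [← Fintype.piFinset_univ, ← Finset.prod_univ_sum (fun _ : ZMod n => (Finset.univ : Finset Bool))
    (fun i b => ((b.toNat : ℝ) * (l * ((f (x (i - 1)) (x i) (x (i + 1))).toNat : ℝ)) +
      (1 - (b.toNat : ℝ)) * (1 - l * ((f (x (i - 1)) (x i) (x (i + 1))).toNat : ℝ))))]
  apply Finset.prod_eq_one
  intro i _
  rw [Fintype.sum_bool]
  simp

lemma ndeca_zero_lb (n : ℕ) [NeZero n] (f : Bool → Bool → Bool → Bool) (l : ℝ)
    (hl : l ∈ Set.Ioo (0:ℝ) 1) (x : ZMod n → Bool) :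
    (1 - l) ^ n ≤ ndecaMatrix n f l x (fun _ => false) := by
  obtain ⟨h0, h1⟩ := hl
  have hcard : (1 - l) ^ n = ∏ _i : ZMod n, (1 - l) := by
    rw [Finset.prod_const, Finset.card_univ, ZMod.card]
  rw [hcard]
  unfold ndecaMatrix
  apply Finset.prod_le_prod
  · intro i _; linarith
  · intro i _
    cases hff : f (x (i-1)) (x i) (x (i+1)) <;> simp [hff] <;> nlinarith

lemma ndeca_zero_row (n : ℕ) [NeZero n] (f : Bool → Bool → Bool → Bool)
    (hf : f false false false = false) (l : ℝ)
    (x : ZMod n → Bool) (hx : x ≠ fun _ => false) :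
    ndecaMatrix n f l (fun _ => false) x = 0 := by
  obtain ⟨i, hi⟩ : ∃ i, x i = true := by
    by_contra h
    push_neg at h
    exact hx (funext fun i => by simpa using h i)
  unfold ndecaMatrix
  apply Finset.prod_eq_zero (Finset.mem_univ i)
  simp [hf, hi]

lemma ndeca_pow_nonneg (n : ℕ) [NeZero n] (f : Bool → Bool → Bool → Bool) (l : ℝ)
    (hl : l ∈ Set.Ioo (0:ℝ) 1) (t : ℕ) :
    ∀ a b : ZMod n → Bool, 0 ≤ (ndecaMatrix n f l ^ t) a b := by
  induction t with
  | zero =>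
    intro a b
    rw [pow_zero]
    rw [Matrix.one_apply]
    split <;> norm_num
  | succ t ih =>
    intro a b
    rw [pow_succ, Matrix.mul_apply]
    exact Finset.sum_nonneg fun z _ => mul_nonneg (ih a z) (ndeca_nonneg n f l hl z b)

theorem stmt5 (n : ℕ) [NeZero n] (f : Bool → Bool → Bool → Bool)
    (hf : f false false false = false)
    (l : ℝ) (hl : l ∈ Set.Ioo (0:ℝ) 1)
    (y : ZMod n → Bool) (hy : y ≠ fun _ => false)
    (t : ℕ) (ht : 1 ≤ t) :
    (∑ x ∈ Finset.univ.filter (fun x : ZMod n → Bool => x ≠ fun _ => false),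
        (ndecaMatrix n f l ^ t) y x) ≤ (1 - (1 - l) ^ n) ^ t ∧
    (1 - (1 - l) ^ n) ^ t ≤ Real.exp (-(t : ℝ) * (1 - l) ^ n) := by
  obtain ⟨h0, h1⟩ := hl
  set P := ndecaMatrix n f l with hP
  set z0 : ZMod n → Bool := fun _ => false with hz0
  set q : ℝ := (1 - l) ^ n with hq
  have hq0 : 0 ≤ q := pow_nonneg (by linarith) n
  have hq1 : q ≤ 1 := pow_le_one₀ (by linarith) (by linarith)
  -- main induction
  have key : ∀ s : ℕ, (∑ x ∈ Finset.univ.erase z0, (P ^ s) y x) ≤ (1 - q) ^ s := by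
    intro s
    induction s with
    | zero =>
      rw [pow_zero, pow_zero]
      have : ∀ x : ZMod n → Bool, (1 : Matrix (ZMod n → Bool) (ZMod n → Bool) ℝ) y x
          = if y = x then 1 else 0 := fun x => Matrix.one_apply
      rw [Finset.sum_congr rfl fun x _ => this x, Finset.sum_ite_eq]
      simp [Finset.mem_erase, hy]
    | succ s ih =>
      have hstep : (∑ x ∈ Finset.univ.erase z0, (P ^ (s+1)) y x)
          = ∑ z : ZMod n → Bool, (P ^ s) y z * ∑ x ∈ Finset.univ.erase z0, P z x := by
        simp only [pow_succ, Matrix.mul_apply]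
        rw [Finset.sum_comm]
        exact Finset.sum_congr rfl fun z _ => (Finset.mul_sum _ _ _).symm
      rw [hstep]
      have hsplit : (∑ z : ZMod n → Bool, (P ^ s) y z * ∑ x ∈ Finset.univ.erase z0, P z x)
          = (∑ z ∈ Finset.univ.erase z0, (P ^ s) y z * ∑ x ∈ Finset.univ.erase z0, P z x)
            + (P ^ s) y z0 * ∑ x ∈ Finset.univ.erase z0, P z0 x := by
        rw [Finset.sum_erase_add _ _ (Finset.mem_univ z0)]
      rw [hsplit]
      have hzero : (∑ x ∈ Finset.univ.erase z0, P z0 x) = 0 := by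
        apply Finset.sum_eq_zero
        intro x hx
        exact ndeca_zero_row n f hf l x (Finset.mem_erase.1 hx).1
      rw [hzero, mul_zero, add_zero]
      have hbound : (∑ z ∈ Finset.univ.erase z0, (P ^ s) y z * ∑ x ∈ Finset.univ.erase z0, P z x)
          ≤ ∑ z ∈ Finset.univ.erase z0, (P ^ s) y z * (1 - q) := by
        apply Finset.sum_le_sum
        intro z _
        apply mul_le_mul_of_nonneg_left _ (ndeca_pow_nonneg n f l ⟨h0, h1⟩ s y z)
        have hrow : (∑ x ∈ Finset.univ.erase z0, P z x) = 1 - P z z0 := by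
          have := ndeca_rowsum n f l z
          have h2 := Finset.sum_erase_add Finset.univ (fun x => P z x) (Finset.mem_univ z0)
          linarith [h2.symm ▸ this]
        rw [hrow]
        linarith [ndeca_zero_lb n f l ⟨h0, h1⟩ z]
      calc _ ≤ ∑ z ∈ Finset.univ.erase z0, (P ^ s) y z * (1 - q) := hbound
        _ = (∑ z ∈ Finset.univ.erase z0, (P ^ s) y z) * (1 - q) := by
            rw [Finset.sum_mul]
        _ ≤ (1 - q) ^ s * (1 - q) := by
            apply mul_le_mul_of_nonneg_right ih (by linarith)
        _ = (1 - q) ^ (s + 1) := by rw [pow_succ]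
  constructor
  · have hfe : Finset.univ.filter (fun x : ZMod n → Bool => x ≠ fun _ => false)
        = Finset.univ.erase z0 := Finset.filter_ne' _ _
    rw [hfe]
    exact key t
  · have h2 : 1 - q ≤ Real.exp (-q) := by
      have := Real.add_one_le_exp (-q)
      linarith
    calc (1 - q) ^ t ≤ (Real.exp (-q)) ^ t := by
          apply pow_le_pow_left₀ (by linarith) h2
      _ = Real.exp (-(t : ℝ) * q) := by
          rw [← Real.exp_nat_mul]
          ring_nf
end

section
/- Let λ ∈ (0,1) and let α be a real number with α·(1−λ) > 1. Then the sequence (1 − (1−λ)ⁿ)^(αⁿ), where the outer exponent αⁿ is taken as a real power, tends to 0 as n → ∞. -/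
theorem stmt7 (l α : ℝ) (hl : l ∈ Set.Ioo (0:ℝ) 1) (hα : α * (1 - l) > 1) :
    Filter.Tendsto (fun n : ℕ => Real.rpow (1 - (1 - l) ^ n) (α ^ n))
      Filter.atTop (nhds 0) := by
  obtain ⟨hl0, hl1⟩ := hl
  set q := 1 - l with hq
  have hq0 : 0 < q := by simp [hq]; linarith
  have hq1 : q < 1 := by simp [hq]; linarith
  have hα1 : 1 < α * q := hα
  have key : Filter.Tendsto (fun n : ℕ => α ^ n * Real.log (1 - q ^ n))
      Filter.atTop Filter.atBot := by
    have h1 : Filter.Tendsto (fun n : ℕ => -((α * q) ^ n)) Filter.atTop Filter.atBot :=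
      Filter.tendsto_neg_atBot_iff.mpr (tendsto_pow_atTop_atTop_of_one_lt hα1)
    refine Filter.tendsto_atBot_mono' _ ?_ h1
    filter_upwards [Filter.eventually_ge_atTop 1] with n hn
    have hqn : q ^ n < 1 := pow_lt_one₀ hq0.le hq1 (by omega)
    have hpos : 0 < 1 - q ^ n := by linarith
    have hlog : Real.log (1 - q ^ n) ≤ -q ^ n := by
      have := Real.log_le_sub_one_of_pos hpos
      linarith
    have hαn : (0:ℝ) < α ^ n := pow_pos (by nlinarith) n
    calc α ^ n * Real.log (1 - q ^ n) ≤ α ^ n * (-q ^ n) :=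
          mul_le_mul_of_nonneg_left hlog hαn.le
      _ = -((α * q) ^ n) := by rw [mul_pow]; ring
  have h2 := Real.tendsto_exp_atBot.comp key
  refine h2.congr' ?_
  filter_upwards [Filter.eventually_ge_atTop 1] with n hn
  have hqn : q ^ n < 1 := pow_lt_one₀ hq0.le hq1 (by omega)
  simp only [Function.comp]
  show _ = (1 - q ^ n) ^ (α ^ n : ℝ)
  rw [Real.rpow_def_of_pos (by linarith), mul_comm]
end

section
/- Let f : {0,1}³ → {0,1} be an elementary cellular automaton local rule with f(0,0,0) = 1 (odd rule) and let λ ∈ (0,1). Then the mean-field fixed-point equation a = λ·Σ_{(z₁,z₂,z₃)∈{0,1}³ : f(z₁,z₂,z₃)=1} Π_{k=1}^{3} (z_k·a + (1−z_k)·(1−a)) has exactly one solution a in the interval [0,1]. -/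
/-- Real value of a binary cell. -/
def bitR (b : Bool) : ℝ := (b.toNat : ℝ)

/-- The mean-field sum `Σ_{f(z)=1} Π_{k=1}^{3} (z_k·a + (1-z_k)·(1-a))`. -/
noncomputable def mfSum (f : Bool → Bool → Bool → Bool) (a : ℝ) : ℝ :=
  ∑ z : Bool × Bool × Bool,
    if f z.1 z.2.1 z.2.2 = true then
      (bitR z.1 * a + (1 - bitR z.1) * (1 - a)) *
        ((bitR z.2.1 * a + (1 - bitR z.2.1) * (1 - a)) *
          (bitR z.2.2 * a + (1 - bitR z.2.2) * (1 - a)))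
    else 0

noncomputable def eR (f : Bool → Bool → Bool → Bool) (b1 b2 b3 : Bool) : ℝ :=
  if f b1 b2 b3 = true then 1 else 0

set_option maxHeartbeats 1000000 in
lemma mfSum_eq (f : Bool → Bool → Bool → Bool) (a : ℝ) :
    mfSum f a =
      eR f false false false * (1-a)^3
      + (eR f true false false + eR f false true false + eR f false false true) * (a*(1-a)^2)
      + (eR f true true false + eR f true false true + eR f false true true) * (a^2*(1-a))
      + eR f true true true * a^3 := by
  simp only [mfSum, Fintype.sum_prod_type, Fintype.sum_bool, bitR, eR]
  norm_num
  split_ifs <;> ring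

set_option maxHeartbeats 1000000 in
lemma claimC (n1 n2 n3 x : ℝ)
    (hn1 : n1 = 0 ∨ n1 = 1 ∨ n1 = 2 ∨ n1 = 3)
    (hn2 : n2 = 0 ∨ n2 = 1 ∨ n2 = 2 ∨ n2 = 3)
    (hn3 : n3 = 0 ∨ n3 = 1)
    (hx0 : 0 < x) (hx1 : x < 1)
    (h : x < (1-x)^3 + n1*(x*(1-x)^2) + n2*(x^2*(1-x)) + n3*x^3) :
    -3*(1-x)^2 + n1*((1-x)^2 - 2*(x*(1-x))) + n2*(2*(x*(1-x)) - x^2) + 3*n3*x^2 ≤ 1 := by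
  rcases hn1 with h1|h1|h1|h1 <;> rcases hn2 with h2|h2|h2|h2 <;> rcases hn3 with h3|h3 <;>
    subst h1 h2 h3 <;>
    nlinarith [sq_nonneg (3*x-1), sq_nonneg (3*x-2), sq_nonneg (2*x-1),
      mul_pos hx0 (sub_pos.2 hx1)]

noncomputable def Ffun (n1 n2 n3 l : ℝ) : ℝ → ℝ :=
  fun y => l * ((1-y)^3 + n1*(y*(1-y)^2) + n2*(y^2*(1-y)) + n3*y^3) - y

lemma Ffun_hasDeriv (n1 n2 n3 l x : ℝ) :
    HasDerivAt (Ffun n1 n2 n3 l)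
      (l * (-3*(1-x)^2 + n1*((1-x)^2 - 2*(x*(1-x))) + n2*(2*(x*(1-x)) - x^2) + 3*n3*x^2) - 1)
      x := by
  have hid : HasDerivAt (fun y : ℝ => y) 1 x := hasDerivAt_id x
  have h1 : HasDerivAt (fun y : ℝ => 1 - y) (-1) x := by
    simpa [Pi.sub_def] using (hasDerivAt_const x (1:ℝ)).sub hid
  have h2 : HasDerivAt (fun y : ℝ => (1-y)^2) (2*(1-x)*(-1)) x := by simpa [Pi.pow_def] using h1.pow 2
  have h3 : HasDerivAt (fun y : ℝ => (1-y)^3) (3*(1-x)^2*(-1)) x := by simpa [Pi.pow_def] using h1.pow 3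
  have hw1 : HasDerivAt (fun y : ℝ => y*(1-y)^2) (1*(1-x)^2 + x*(2*(1-x)*(-1))) x := hid.mul h2
  have hsq : HasDerivAt (fun y : ℝ => y^2) (2*x) x := by simpa [Pi.pow_def] using hid.pow 2
  have hw2 : HasDerivAt (fun y : ℝ => y^2*(1-y)) (2*x*(1-x) + x^2*(-1)) x := hsq.mul h1
  have hw3 : HasDerivAt (fun y : ℝ => y^3) (3*x^2) x := by simpa [Pi.pow_def] using hid.pow 3
  have hS := ((h3.add (hw1.const_mul n1)).add (hw2.const_mul n2)).add (hw3.const_mul n3)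
  have hF := (hS.const_mul l).sub hid
  unfold Ffun
  convert hF using 1
  · rfl
  · rfl
  · rfl
  · ring

lemma Ffun_cont (n1 n2 n3 l : ℝ) : Continuous (Ffun n1 n2 n3 l) := by
  unfold Ffun; fun_prop

lemma unique_fp (n1 n2 n3 l : ℝ)
    (hn1 : n1 = 0 ∨ n1 = 1 ∨ n1 = 2 ∨ n1 = 3)
    (hn2 : n2 = 0 ∨ n2 = 1 ∨ n2 = 2 ∨ n2 = 3)
    (hn3 : n3 = 0 ∨ n3 = 1)
    (hl0 : 0 < l) (hl1 : l < 1) :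
    ∃! a : ℝ, a ∈ Set.Icc (0:ℝ) 1 ∧
      a = l * ((1-a)^3 + n1*(a*(1-a)^2) + n2*(a^2*(1-a)) + n3*a^3) := by
  have hn3le : 0 ≤ n3 ∧ n3 ≤ 1 := by rcases hn3 with h|h <;> subst h <;> norm_num
  set F := Ffun n1 n2 n3 l with hFdef
  have hF0 : F 0 = l := by simp [hFdef, Ffun]
  have hF1 : F 1 = l * n3 - 1 := by simp [hFdef, Ffun]
  have hcont : Continuous F := by rw [hFdef]; exact Ffun_cont n1 n2 n3 l
  -- root characterization
  have hroot : ∀ y : ℝ, (y = l * ((1-y)^3 + n1*(y*(1-y)^2) + n2*(y^2*(1-y)) + n3*y^3)) ↔ F y = 0 := by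
    intro y
    constructor <;> intro h
    · simp only [hFdef, Ffun]; linarith
    · have : l * ((1-y)^3 + n1*(y*(1-y)^2) + n2*(y^2*(1-y)) + n3*y^3) - y = 0 := h
      linarith
  -- derivative negativity at points where F ≥ 0
  have hderneg : ∀ x : ℝ, 0 < x → x < 1 → 0 ≤ F x →
      l * (-3*(1-x)^2 + n1*((1-x)^2 - 2*(x*(1-x))) + n2*(2*(x*(1-x)) - x^2) + 3*n3*x^2) - 1 < 0 := by
    intro x hx0 hx1 hFx
    have hFx' : 0 ≤ l * ((1-x)^3 + n1*(x*(1-x)^2) + n2*(x^2*(1-x)) + n3*x^3) - x := hFx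
    have hSgt : x < (1-x)^3 + n1*(x*(1-x)^2) + n2*(x^2*(1-x)) + n3*x^3 := by
      nlinarith [hFx', mul_pos hl0 hx0]
    have hle := claimC n1 n2 n3 x hn1 hn2 hn3 hx0 hx1 hSgt
    set D := -3*(1-x)^2 + n1*((1-x)^2 - 2*(x*(1-x))) + n2*(2*(x*(1-x)) - x^2) + 3*n3*x^2 with hD
    rcases le_or_gt D 0 with h|h
    · have : l * D ≤ 0 := mul_nonpos_of_nonneg_of_nonpos hl0.le h
      linarith
    · have : l * D < 1 * D := mul_lt_mul_of_pos_right hl1 h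
      linarith
  -- existence
  have hF1le : F 1 ≤ 0 := by rw [hF1]; nlinarith [hn3le.2]
  have h0mem : (0:ℝ) ∈ Set.Icc (F 1) (F 0) := ⟨hF1le, by rw [hF0]; exact hl0.le⟩
  obtain ⟨c, hcmem, hFc⟩ :=
    intermediate_value_Icc' (by norm_num : (0:ℝ) ≤ 1) hcont.continuousOn h0mem
  -- uniqueness core
  have key : ∀ a b : ℝ, a ∈ Set.Icc (0:ℝ) 1 → b ∈ Set.Icc (0:ℝ) 1 →
      F a = 0 → F b = 0 → a < b → False := by
    intro a b ha hb hFa hFb hab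
    have ha0 : 0 < a := by
      rcases eq_or_lt_of_le ha.1 with h|h
      · exfalso
        rw [← h] at hFa
        rw [hF0] at hFa; linarith
      · exact h
    have hb1 : b < 1 := by
      rcases eq_or_lt_of_le hb.2 with h|h
      · exfalso
        rw [h] at hFb
        rw [hF1] at hFb; nlinarith [hn3le.2]
      · exact h
    obtain ⟨m, hmmem, hmax⟩ :=
      isCompact_Icc.exists_isMaxOn (Set.nonempty_Icc.mpr hab.le) hcont.continuousOn
    have hFm0 : 0 ≤ F m := by
      have h : F a ≤ F m := hmax (Set.left_mem_Icc.mpr hab.le)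
      rw [hFa] at h; exact h
    by_cases hm : m ∈ Set.Ioo a b
    · have hloc : IsLocalMax F m := hmax.isLocalMax (Icc_mem_nhds hm.1 hm.2)
      have hd0 : deriv F m = 0 := hloc.deriv_eq_zero
      have hder := Ffun_hasDeriv n1 n2 n3 l m
      rw [← hFdef] at hder
      have hdval := hder.deriv
      have hneg := hderneg m (ha0.trans hm.1) (hm.2.trans hb1) hFm0
      rw [hd0] at hdval
      linarith
    · -- m is an endpoint, so F ≤ 0 on [a,b]
      have hFm : F m = 0 := by
        rcases hmmem with ⟨h1, h2⟩
        rcases eq_or_lt_of_le h1 with h|h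
        · rw [← h]; exact hFa
        · rcases eq_or_lt_of_le h2 with h'|h'
          · rw [h']; exact hFb
          · exact absurd ⟨h, h'⟩ hm
      have hFle : ∀ x ∈ Set.Icc a b, F x ≤ 0 := by
        intro x hx
        have h : F x ≤ F m := hmax hx
        rw [hFm] at h; exact h
      have hder := Ffun_hasDeriv n1 n2 n3 l b
      rw [← hFdef] at hder
      have hnegb := hderneg b (ha0.trans hab) hb1 (le_of_eq hFb.symm)
      have htend := hasDerivAt_iff_tendsto_slope.mp hder
      have hev : ∀ᶠ x in nhdsWithin b {b}ᶜ, slope F b x < 0 :=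
        htend.eventually (gt_mem_nhds hnegb)
      have hmono : nhdsWithin b (Set.Iio b) ≤ nhdsWithin b {b}ᶜ :=
        nhdsWithin_mono b (fun x hx => ne_of_lt hx)
      have hev2 : ∀ᶠ x in nhdsWithin b (Set.Iio b), slope F b x < 0 := hev.filter_mono hmono
      have hev3 : ∀ᶠ x in nhdsWithin b (Set.Iio b), a < x :=
        eventually_nhdsWithin_of_eventually_nhds (eventually_gt_nhds hab)
      have hev4 : ∀ᶠ x in nhdsWithin b (Set.Iio b), x < b :=
        eventually_mem_nhdsWithin
      obtain ⟨x, hs, hax, hxb⟩ := (hev2.and (hev3.and hev4)).exists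
      rw [slope_def_field, hFb] at hs
      -- hs : (F x - 0) / (x - b) < 0  (note slope f a b = (f b - f a)/(b - a))
      have hFxpos : 0 < F x := by
        rcases div_neg_iff.mp hs with ⟨h1, h2⟩ | ⟨h1, h2⟩
        · linarith
        · linarith
      have := hFle x ⟨hax.le, hxb.le⟩
      linarith
  refine ⟨c, ⟨hcmem, (hroot c).mpr hFc⟩, ?_⟩
  rintro y ⟨hymem, hy⟩
  have hFy : F y = 0 := (hroot y).mp hy
  rcases lt_trichotomy y c with h|h|h
  · exact absurd (key y c hymem hcmem hFy hFc h) (by simp)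
  · exact h
  · exact absurd (key c y hcmem hymem hFc hFy h) (by simp)

theorem stmt9 (f : Bool → Bool → Bool → Bool) (hf : f false false false = true)
    (l : ℝ) (hl : l ∈ Set.Ioo (0:ℝ) 1) :
    ∃! a : ℝ, a ∈ Set.Icc (0:ℝ) 1 ∧ a = l * mfSum f a := by
  obtain ⟨hl0, hl1⟩ := hl
  have h000 : eR f false false false = 1 := by simp [eR, hf]
  have e01 : ∀ b1 b2 b3, eR f b1 b2 b3 = 0 ∨ eR f b1 b2 b3 = 1 := by
    intro b1 b2 b3
    by_cases h : f b1 b2 b3 = true <;> simp [eR, h]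
  have hn1 : ∀ x y z : ℝ, (x = 0 ∨ x = 1) → (y = 0 ∨ y = 1) → (z = 0 ∨ z = 1) →
      (x + y + z = 0 ∨ x + y + z = 1 ∨ x + y + z = 2 ∨ x + y + z = 3) := by
    intro x y z hx hy hz
    rcases hx with h|h <;> rcases hy with h'|h' <;> rcases hz with h''|h'' <;>
      subst h h' h'' <;> norm_num
  have hmf : ∀ a : ℝ, mfSum f a =
      (1-a)^3
      + (eR f true false false + eR f false true false + eR f false false true)*(a*(1-a)^2)
      + (eR f true true false + eR f true false true + eR f false true true)*(a^2*(1-a))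
      + (eR f true true true)*a^3 := by
    intro a
    rw [mfSum_eq, h000]; ring
  have h1 := hn1 _ _ _ (e01 true false false) (e01 false true false) (e01 false false true)
  have h2 := hn1 _ _ _ (e01 true true false) (e01 true false true) (e01 false true true)
  have h3 := e01 true true true
  have := unique_fp
    (eR f true false false + eR f false true false + eR f false false true)
    (eR f true true false + eR f true false true + eR f false true true)
    (eR f true true true) l h1 h2 h3 hl0 hl1
  simp only [← hmf] at this
  exact this
end

section
/- Let f : {0,1}³ → {0,1} be the rule of ECA 254, i.e. f(z₁,z₂,z₃) = 0 if (z₁,z₂,z₃) = (0,0,0) and f(z₁,z₂,z₃) = 1 otherwise (the percolation PCA). Then the set of solutions in [0,1] of the mean-field fixed-point equation a = λ·(a³ − 3a² + 3a) is {0} for λ ∈ (0, 1/3], and is exactly {0, 3/2 − √(1/λ − 3/4)} for λ ∈ (1/3, 1), with the nonzero solution lying in (0,1). -/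
theorem stmt13 (f : Bool → Bool → Bool → Bool)
    (hf : ∀ z₁ z₂ z₃, f z₁ z₂ z₃ = (z₁ || z₂ || z₃))
    (l : ℝ) (hl : l ∈ Set.Ioo (0:ℝ) 1) :
    (l ≤ 1/3 →
      {a : ℝ | a ∈ Set.Icc (0:ℝ) 1 ∧ a = l * (a^3 - 3*a^2 + 3*a)} = {0}) ∧
    (1/3 < l →
      {a : ℝ | a ∈ Set.Icc (0:ℝ) 1 ∧ a = l * (a^3 - 3*a^2 + 3*a)}
          = {0, 3/2 - Real.sqrt (1/l - 3/4)} ∧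
        (3/2 - Real.sqrt (1/l - 3/4)) ∈ Set.Ioo (0:ℝ) 1) := by
  obtain ⟨hl0, hl1⟩ := hl
  have hlne : l ≠ 0 := ne_of_gt hl0
  have hinv : 1 < 1/l := by rw [lt_div_iff₀ hl0]; linarith
  have hpos : (0:ℝ) ≤ 1/l - 3/4 := by linarith
  set s := Real.sqrt (1/l - 3/4) with hsdef
  have hs0 : 0 ≤ s := Real.sqrt_nonneg _
  have hs2 : s^2 = 1/l - 3/4 := Real.sq_sqrt hpos
  have hls : l * s^2 = 1 - 3/4 * l := by
    rw [hs2]; field_simp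
  have expand : ∀ a : ℝ,
      l * a * ((a - (3/2 - s)) * (a - (3/2 + s))) = l * (a^3 - 3*a^2 + 3*a) - a := by
    intro a
    linear_combination (-a) * hls
  have key : ∀ a : ℝ, a = l * (a^3 - 3*a^2 + 3*a) ↔
      a = 0 ∨ a = 3/2 - s ∨ a = 3/2 + s := by
    intro a
    constructor
    · intro h
      have h0 : l * a * ((a - (3/2 - s)) * (a - (3/2 + s))) = 0 := by
        rw [expand a]; linarith
      rcases mul_eq_zero.mp h0 with h1 | h1
      · rcases mul_eq_zero.mp h1 with h2 | h2
        · exact absurd h2 hlne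
        · exact Or.inl h2
      · rcases mul_eq_zero.mp h1 with h2 | h2
        · exact Or.inr (Or.inl (by linarith [sub_eq_zero.mp h2]))
        · exact Or.inr (Or.inr (by linarith [sub_eq_zero.mp h2]))
    · intro h
      rcases h with h | h | h
      · subst h; ring
      · have h0 : l * (3/2 - s) * (((3/2 - s) - (3/2 - s)) * ((3/2 - s) - (3/2 + s))) = 0 := by
          ring
        have := expand (3/2 - s)
        rw [h0] at this
        subst h; linarith
      · have h0 : l * (3/2 + s) * (((3/2 + s) - (3/2 - s)) * ((3/2 + s) - (3/2 + s))) = 0 := by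
          ring
        have := expand (3/2 + s)
        rw [h0] at this
        subst h; linarith
  constructor
  · intro hle
    have h3 : (3:ℝ) ≤ 1/l := by rw [le_div_iff₀ hl0]; linarith
    have hs32 : 3/2 ≤ s := by nlinarith [hs2, hs0]
    ext a
    simp only [Set.mem_setOf_eq, Set.mem_Icc, Set.mem_singleton_iff]
    constructor
    · rintro ⟨⟨ha0, ha1⟩, heq⟩
      rcases (key a).mp heq with h | h | h
      · exact h
      · linarith
      · linarith
    · rintro rfl
      exact ⟨⟨le_refl 0, by norm_num⟩, by ring⟩
  · intro hgt
    have h3 : 1/l < 3 := by rw [div_lt_iff₀ hl0]; linarith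
    have hs32 : s < 3/2 := by nlinarith [hs2, hs0]
    have hs12 : 1/2 < s := by nlinarith [hs2, hs0]
    refine ⟨?_, by constructor <;> linarith⟩
    ext a
    simp only [Set.mem_setOf_eq, Set.mem_Icc, Set.mem_insert_iff, Set.mem_singleton_iff]
    constructor
    · rintro ⟨⟨ha0, ha1⟩, heq⟩
      rcases (key a).mp heq with h | h | h
      · exact Or.inl h
      · exact Or.inr h
      · linarith
    · rintro (rfl | rfl)
      · exact ⟨⟨le_refl 0, by norm_num⟩, by ring⟩
      · exact ⟨⟨by linarith, by linarith⟩, (key _).mpr (Or.inr (Or.inl rfl))⟩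
end

section
/- Let f : {0,1}³ → {0,1} be the majority rule (ECA 232), i.e. f(z₁,z₂,z₃) = 1 exactly when z₁ + z₂ + z₃ ≥ 2. Then the set of solutions in [0,1] of the mean-field fixed-point equation a = λ·(3a² − 2a³) is: {0} for λ ∈ (0, 8/9); {0, 3/4} for λ = 8/9; and exactly {0, 3/4 − √(9/16 − 1/(2λ)), 3/4 + √(9/16 − 1/(2λ))} for λ ∈ (8/9, 1), with both nonzero solutions lying in (0,1). In particular the largest nonzero solution does not tend to 0 as λ decreases to 8/9 (discontinuous transition). -/
theorem stmt15 (f : Bool → Bool → Bool → Bool)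
    (hf : ∀ z₁ z₂ z₃, f z₁ z₂ z₃ = decide (2 ≤ z₁.toNat + z₂.toNat + z₃.toNat)) :
    (∀ l ∈ Set.Ioo (0:ℝ) 1,
      (l < 8/9 →
        {a : ℝ | a ∈ Set.Icc (0:ℝ) 1 ∧ a = l * (3*a^2 - 2*a^3)} = {0}) ∧
      (l = 8/9 →
        {a : ℝ | a ∈ Set.Icc (0:ℝ) 1 ∧ a = l * (3*a^2 - 2*a^3)} = {0, 3/4}) ∧
      (8/9 < l →
        {a : ℝ | a ∈ Set.Icc (0:ℝ) 1 ∧ a = l * (3*a^2 - 2*a^3)}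
            = {0, 3/4 - Real.sqrt (9/16 - 1/(2*l)), 3/4 + Real.sqrt (9/16 - 1/(2*l))} ∧
          (3/4 - Real.sqrt (9/16 - 1/(2*l))) ∈ Set.Ioo (0:ℝ) 1 ∧
          (3/4 + Real.sqrt (9/16 - 1/(2*l))) ∈ Set.Ioo (0:ℝ) 1)) ∧
    ¬ Filter.Tendsto (fun l : ℝ => 3/4 + Real.sqrt (9/16 - 1/(2*l)))
        (nhdsWithin (8/9) (Set.Ioi (8/9))) (nhds 0) := by
  constructor
  · rintro l ⟨hl0, hl1⟩
    refine ⟨?_, ?_, ?_⟩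
    · -- l < 8/9
      intro h
      ext a
      simp only [Set.mem_setOf_eq, Set.mem_singleton_iff, Set.mem_Icc]
      constructor
      · rintro ⟨⟨ha0, ha1⟩, heq⟩
        by_contra hne
        have hmul : a * (2*l*a^2 - 3*l*a + 1) = 0 := by linear_combination heq
        rcases mul_eq_zero.mp hmul with h0 | hq
        · exact hne h0
        · nlinarith [sq_nonneg (a - 3/4), hl0, h]
      · rintro rfl
        exact ⟨⟨le_refl _, zero_le_one⟩, by ring⟩
    · -- l = 8/9
      rintro rfl
      ext a
      simp only [Set.mem_setOf_eq, Set.mem_insert_iff, Set.mem_singleton_iff, Set.mem_Icc]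
      constructor
      · rintro ⟨⟨ha0, ha1⟩, heq⟩
        have hmul : a * (a - 3/4)^2 = 0 := by linear_combination (9/16) * heq
        rcases mul_eq_zero.mp hmul with h0 | hq
        · exact Or.inl h0
        · right
          have := pow_eq_zero_iff (n := 2) (by norm_num) |>.mp hq
          linarith [sub_eq_zero.mp this]
      · rintro (rfl | rfl)
        · exact ⟨⟨le_refl _, zero_le_one⟩, by ring⟩
        · exact ⟨⟨by norm_num, by norm_num⟩, by norm_num⟩
    · -- 8/9 < l
      intro h
      set s := Real.sqrt (9/16 - 1/(2*l)) with hs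
      have hlpos : (0:ℝ) < 2*l := by linarith
      have hlne : (2*l : ℝ) ≠ 0 := ne_of_gt hlpos
      have hinv : 2*l*(1/(2*l)) = 1 := by field_simp
      have harg : (0:ℝ) < 9/16 - 1/(2*l) := by
        have : 1/(2*l) < 9/16 := by
          rw [div_lt_iff₀ hlpos]; nlinarith
        linarith
      have hs2 : s^2 = 9/16 - 1/(2*l) := Real.sq_sqrt (le_of_lt harg)
      have hspos : 0 < s := Real.sqrt_pos.mpr harg
      have hslt : s < 1/4 := by
        have : (9:ℝ)/16 - 1/(2*l) < (1/4)^2 := by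
          have : (1:ℝ)/2 < 1/(2*l) := by
            rw [div_lt_div_iff₀ (by norm_num) hlpos]; nlinarith
          nlinarith
        calc s < Real.sqrt ((1/4)^2) := Real.sqrt_lt_sqrt (le_of_lt harg) this
          _ = 1/4 := by rw [Real.sqrt_sq]; norm_num
      have hmemm : (3/4 - s) ∈ Set.Ioo (0:ℝ) 1 := ⟨by linarith, by linarith⟩
      have hmemp : (3/4 + s) ∈ Set.Ioo (0:ℝ) 1 := ⟨by linarith, by linarith⟩
      refine ⟨?_, hmemm, hmemp⟩
      ext a
      simp only [Set.mem_setOf_eq, Set.mem_insert_iff, Set.mem_singleton_iff, Set.mem_Icc]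
      constructor
      · rintro ⟨⟨ha0, ha1⟩, heq⟩
        have hmul : a * (2*l*a^2 - 3*l*a + 1) = 0 := by linear_combination heq
        rcases mul_eq_zero.mp hmul with h0 | hq0
        · exact Or.inl h0
        · have key : 2*l*((a - (3/4 - s))*(a - (3/4 + s))) = 0 := by
            linear_combination hq0 - 2*l*hs2 + hinv
          rcases mul_eq_zero.mp key with h0 | h1
          · exact absurd h0 hlne
          · rcases mul_eq_zero.mp h1 with h2 | h2
            · exact Or.inr (Or.inl (sub_eq_zero.mp h2))
            · exact Or.inr (Or.inr (sub_eq_zero.mp h2))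
      · rintro (rfl | rfl | rfl)
        · exact ⟨⟨le_refl _, zero_le_one⟩, by ring⟩
        · refine ⟨⟨le_of_lt hmemm.1, le_of_lt hmemm.2⟩, ?_⟩
          have hq : 2*l*(3/4 - s)^2 - 3*l*(3/4 - s) + 1 = 0 := by
            linear_combination 2*l*hs2 - hinv
          linear_combination (3/4 - s) * hq
        · refine ⟨⟨le_of_lt hmemp.1, le_of_lt hmemp.2⟩, ?_⟩
          have hq : 2*l*(3/4 + s)^2 - 3*l*(3/4 + s) + 1 = 0 := by
            linear_combination 2*l*hs2 - hinv
          linear_combination (3/4 + s) * hq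
  · intro h
    have h3 := h.eventually_lt_const (show (0:ℝ) < 3/4 by norm_num)
    obtain ⟨x, hx⟩ := h3.exists
    have := Real.sqrt_nonneg (9/16 - 1/(2*x))
    linarith
end
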